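/- If u and v are adjacent vertices of SATP(m,n) (distinct integral points whose segment [u,v] is disjoint from the convex hull of the remaining integral points), then the closed segment [u,v] is a face of SATP_LP(m,n); in particular, every integral point of SATP_LP(m,n) is an extreme point of SATP_LP(m,n). (This is the Trubin quasi-integrality property: the 1-skeleton of SATP(m,n) is a subset of the 1-skeleton of SATP_LP(m,n).) -/

import Mathlib

open Finset

/-- A point of ℝ^{6mn}: coordinates x^{k,l}_{i,j} with `i : Fin m`, `j : Fin n`,
`k : Fin 3` (the paper's k-1, since the paper indexes k ∈ {1,2,3}) and
`l : Fin 2` (the paper's l-1). -/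
abbrev Pt (m n : ℕ) := Fin m → Fin n → Fin 3 → Fin 2 → ℝ

/-- The relaxation polytope SATP_LP(m,n), given by the constraints (i)-(iv). -/
def SATPLP (m n : ℕ) : Set (Pt m n) :=
  {x | (∀ i j, ∑ k, ∑ l, x i j k l = 1) ∧
       (∀ i j t, ∑ k, x i j k 0 = ∑ k, x i t k 0) ∧
       (∀ k j i s, x i j k 0 + x i j k 1 = x s j k 0 + x s j k 1) ∧
       (∀ i j k l, 0 ≤ x i j k l)}

/-- The integral points of SATP_LP(m,n): the points all of whose coordinates are 0 or 1. -/
def IntPts (m n : ℕ) : Set (Pt m n) :=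
  {x | x ∈ SATPLP m n ∧ ∀ i j k l, x i j k l = 0 ∨ x i j k l = 1}

/-- SATP(m,n): the convex hull of the integral points of SATP_LP(m,n). -/
def SATP (m n : ℕ) : Set (Pt m n) := convexHull ℝ (IntPts m n)

/-- Two distinct integral points u, v of SATP_LP(m,n) are adjacent (as vertices of
SATP(m,n)) iff the segment [u,v] is disjoint from the convex hull of the remaining
integral points. -/
def IsAdjacent {m n : ℕ} (u v : Pt m n) : Prop :=
  u ∈ IntPts m n ∧ v ∈ IntPts m n ∧ u ≠ v ∧
  segment ℝ u v ∩ convexHull ℝ (IntPts m n \ {u, v}) = ∅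

def pt {m n : ℕ} (a : Fin m → Fin 2) (b : Fin n → Fin 3) : Pt m n :=
  fun i j k l => if b j = k ∧ a i = l then 1 else 0

lemma fin2cases (v : Fin 2) : v = 0 ∨ v = 1 := by revert v; decide

lemma fin3cases (v : Fin 3) : v = 0 ∨ v = 1 ∨ v = 2 := by revert v; decide

lemma chi_sum3 (c : Fin 3) : ∑ k, (if c = k then (1:ℝ) else 0) = 1 := by
  simp [Finset.sum_ite_eq]

lemma chi_sum2 (c : Fin 2) : ∑ l, (if c = l then (1:ℝ) else 0) = 1 := by
  simp [Finset.sum_ite_eq]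

lemma pt_rowsum {m n : ℕ} (a : Fin m → Fin 2) (b : Fin n → Fin 3) (i j) (l : Fin 2) :
    ∑ k, pt a b i j k l = if a i = l then 1 else 0 := by
  by_cases h : a i = l
  · simp [pt, h, Finset.sum_ite_eq]
  · simp [pt, h]

lemma pt_colsum {m n : ℕ} (a : Fin m → Fin 2) (b : Fin n → Fin 3) (i j) (k : Fin 3) :
    pt a b i j k 0 + pt a b i j k 1 = if b j = k then 1 else 0 := by
  by_cases h : b j = k
  · rcases fin2cases (a i) with h2 | h2 <;> simp [pt, h, h2]
  · simp [pt, h]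

lemma pt_mem_IntPts {m n : ℕ} (a : Fin m → Fin 2) (b : Fin n → Fin 3) :
    pt a b ∈ IntPts m n := by
  refine ⟨⟨fun i j => ?_, fun i j t => ?_, fun k j i s => ?_, fun i j k l => ?_⟩,
    fun i j k l => ?_⟩
  · have : ∀ k, ∑ l, pt a b i j k l = if b j = k then 1 else 0 := by
      intro k
      by_cases h : b j = k
      · simp [pt, h, Finset.sum_ite_eq]
      · simp [pt, h]
    simp only [this]
    simp [Finset.sum_ite_eq]
  · have e : ∀ jj, ∑ k, pt a b i jj k 0 = if a i = 0 then (1:ℝ) else 0 := fun jj => pt_rowsum a b i jj 0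
    rw [e j, e t]
  · rw [pt_colsum, pt_colsum]
  · unfold pt; split <;> norm_num
  · unfold pt; split <;> simp

lemma satplp_convex (m n : ℕ) : Convex ℝ (SATPLP m n) := by
  intro x hx y hy p q hp hq hpq
  obtain ⟨hx1, hx2, hx3, hx4⟩ := hx
  obtain ⟨hy1, hy2, hy3, hy4⟩ := hy
  refine ⟨fun i j => ?_, fun i j t => ?_, fun k j i s => ?_, fun i j k l => ?_⟩
  · simp only [Pi.add_apply, Pi.smul_apply, smul_eq_mul, Finset.sum_add_distrib,
      ← Finset.mul_sum, hx1 i j, hy1 i j]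
    linarith
  · simp only [Pi.add_apply, Pi.smul_apply, smul_eq_mul, Finset.sum_add_distrib,
      ← Finset.mul_sum, hx2 i j t, hy2 i j t]
  · simp only [Pi.add_apply, Pi.smul_apply, smul_eq_mul]
    have h1 : p * (x i j k 0 + x i j k 1) = p * (x s j k 0 + x s j k 1) := by
      rw [hx3 k j i s]
    have h2 : q * (y i j k 0 + y i j k 1) = q * (y s j k 0 + y s j k 1) := by
      rw [hy3 k j i s]
    linarith
  · simp only [Pi.add_apply, Pi.smul_apply, smul_eq_mul]
    have := hx4 i j k l
    have := hy4 i j k l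
    positivity

lemma cell_sum {m n : ℕ} {x : Pt m n} (hx : x ∈ SATPLP m n) (i j) :
    ∑ p : Fin 3 × Fin 2, x i j p.1 p.2 = 1 := by
  rw [Fintype.sum_prod_type]; exact hx.1 i j

lemma satplp_le_one {m n : ℕ} {x : Pt m n} (hx : x ∈ SATPLP m n) (i j k l) :
    x i j k l ≤ 1 := by
  have h := cell_sum hx i j
  have h2 : x i j k l ≤ ∑ p : Fin 3 × Fin 2, x i j p.1 p.2 :=
    Finset.single_le_sum (f := fun p : Fin 3 × Fin 2 => x i j p.1 p.2)
      (fun p _ => hx.2.2.2 i j p.1 p.2) (Finset.mem_univ (k, l))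
  linarith

lemma star {m n : ℕ} (a a' : Fin m → Fin 2) (b b' : Fin n → Fin 3) (x : Pt m n)
    (hx : x ∈ SATPLP m n)
    (hs : ∀ i j k l, pt a b i j k l = 0 → pt a' b' i j k l = 0 → x i j k l = 0)
    (i : Fin m) (j : Fin n) (k : Fin 3) (l : Fin 2) :
    x i j k l = (1 - x i j (b' j) (a' i)) * pt a b i j k l
      + x i j (b' j) (a' i) * pt a' b' i j k l := by
  have hs' : ∀ k l, ¬(b j = k ∧ a i = l) → ¬(b' j = k ∧ a' i = l) → x i j k l = 0 := by
    intro k l h1 h2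
    exact hs i j k l (by simp [pt, h1]) (by simp [pt, h2])
  have hone := cell_sum hx i j
  by_cases h1 : b j = k ∧ a i = l <;> by_cases h2 : b' j = k ∧ a' i = l
  · -- both: forced entry
    have hx1 : x i j k l = 1 := by
      rw [← hone]
      symm
      apply Fintype.sum_eq_single (k, l)
      intro p hp
      refine hs' p.1 p.2 ?_ ?_
      · rintro ⟨e1, e2⟩; exact hp (Prod.ext (e1 ▸ h1.1.symm ▸ rfl) (e2 ▸ h1.2.symm ▸ rfl))
      · rintro ⟨e1, e2⟩; exact hp (Prod.ext (e1 ▸ h2.1.symm ▸ rfl) (e2 ▸ h2.2.symm ▸ rfl))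
    have ht : x i j (b' j) (a' i) = x i j k l := by rw [h2.1, h2.2]
    simp [pt, h1, h2, hx1, ht]
  · -- u-entry only
    have hne : ((k, l) : Fin 3 × Fin 2) ≠ (b' j, a' i) := by
      intro hEq
      exact h2 ⟨(congrArg Prod.fst hEq).symm, (congrArg Prod.snd hEq).symm⟩
    have hpair : x i j k l + x i j (b' j) (a' i) = 1 := by
      have hsub : ∑ p : Fin 3 × Fin 2, x i j p.1 p.2
          = ∑ p ∈ ({(k, l), (b' j, a' i)} : Finset (Fin 3 × Fin 2)), x i j p.1 p.2 := by
        symm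
        apply Finset.sum_subset (Finset.subset_univ _)
        intro p _ hp
        simp only [Finset.mem_insert, Finset.mem_singleton, not_or] at hp
        refine hs' p.1 p.2 ?_ ?_
        · rintro ⟨e1, e2⟩
          exact hp.1 (Prod.ext (by rw [← e1, h1.1]) (by rw [← e2, h1.2]))
        · rintro ⟨e1, e2⟩
          exact hp.2 (Prod.ext e1.symm e2.symm)
      rw [hsub, Finset.sum_pair hne] at hone
      exact hone
    simp only [pt, if_pos h1, if_neg h2]
    linarith
  · -- v-entry only
    have ht : x i j (b' j) (a' i) = x i j k l := by rw [h2.1, h2.2]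
    simp [pt, h1, h2, ht]
  · simp [pt, h1, h2, hs' k l h1 h2]

lemma tconstA {m n : ℕ} (a a' : Fin m → Fin 2) (b b' : Fin n → Fin 3) (x : Pt m n)
    (hx : x ∈ SATPLP m n)
    (hs : ∀ i j k l, pt a b i j k l = 0 → pt a' b' i j k l = 0 → x i j k l = 0)
    (i : Fin m) (hi : a i ≠ a' i) (j j' : Fin n) :
    x i j (b' j) (a' i) = x i j' (b' j') (a' i) := by
  have e : ∀ jj, ∑ k, x i jj k 0
      = (1 - x i jj (b' jj) (a' i)) * (if a i = 0 then (1:ℝ) else 0)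
        + x i jj (b' jj) (a' i) * (if a' i = 0 then (1:ℝ) else 0) := by
    intro jj
    calc ∑ k, x i jj k 0
        = ∑ k, ((1 - x i jj (b' jj) (a' i)) * pt a b i jj k 0
            + x i jj (b' jj) (a' i) * pt a' b' i jj k 0) :=
          Finset.sum_congr rfl fun k _ => star a a' b b' x hx hs i jj k 0
      _ = (1 - x i jj (b' jj) (a' i)) * ∑ k, pt a b i jj k 0
            + x i jj (b' jj) (a' i) * ∑ k, pt a' b' i jj k 0 := by
          rw [Finset.sum_add_distrib, Finset.mul_sum, Finset.mul_sum]
      _ = _ := by rw [pt_rowsum, pt_rowsum]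
  have h := hx.2.1 i j j'
  rw [e j, e j'] at h
  rcases fin2cases (a i) with h2 | h2 <;> rcases fin2cases (a' i) with h3 | h3 <;>
    first
      | (exact absurd (h2.trans h3.symm) hi)
      | (simp only [h2, h3] at h ⊢; norm_num at h; linarith)

lemma tconstB {m n : ℕ} (a a' : Fin m → Fin 2) (b b' : Fin n → Fin 3) (x : Pt m n)
    (hx : x ∈ SATPLP m n)
    (hs : ∀ i j k l, pt a b i j k l = 0 → pt a' b' i j k l = 0 → x i j k l = 0)
    (j : Fin n) (hj : b j ≠ b' j) (i i' : Fin m) :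
    x i j (b' j) (a' i) = x i' j (b' j) (a' i') := by
  have e : ∀ ii, x ii j (b' j) 0 + x ii j (b' j) 1 = x ii j (b' j) (a' ii) := by
    intro ii
    rw [star a a' b b' x hx hs ii j (b' j) 0, star a a' b b' x hx hs ii j (b' j) 1]
    have : (1 - x ii j (b' j) (a' ii)) * pt a b ii j (b' j) 0
        + x ii j (b' j) (a' ii) * pt a' b' ii j (b' j) 0
        + ((1 - x ii j (b' j) (a' ii)) * pt a b ii j (b' j) 1
          + x ii j (b' j) (a' ii) * pt a' b' ii j (b' j) 1)
        = (1 - x ii j (b' j) (a' ii)) * (pt a b ii j (b' j) 0 + pt a b ii j (b' j) 1)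
          + x ii j (b' j) (a' ii) * (pt a' b' ii j (b' j) 0 + pt a' b' ii j (b' j) 1) := by
      ring
    rw [this, pt_colsum, pt_colsum, if_neg hj, if_pos rfl]
    ring
  have h := hx.2.2.1 (b' j) j i i'
  rw [e i, e i'] at h
  exact h

lemma intpts_repr {m n : ℕ} (z : Pt m n) (hz : z ∈ IntPts m n) (i0 : Fin m) (j0 : Fin n) :
    ∃ (a : Fin m → Fin 2) (b : Fin n → Fin 3), z = pt a b := by
  classical
  obtain ⟨hmem, h01⟩ := hz
  have hnn : ∀ i j k l, (0:ℝ) ≤ z i j k l := hmem.2.2.2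
  have htwo : ∀ (i : Fin m) (j : Fin n) (p q : Fin 3 × Fin 2), p ≠ q →
      z i j p.1 p.2 = 1 → z i j q.1 q.2 = 1 → False := by
    intro i j p q hpq hp hq
    have hle : ∑ r ∈ ({p, q} : Finset (Fin 3 × Fin 2)), z i j r.1 r.2
        ≤ ∑ r : Fin 3 × Fin 2, z i j r.1 r.2 :=
      Finset.sum_le_sum_of_subset_of_nonneg (Finset.subset_univ _)
        (fun r _ _ => hnn i j r.1 r.2)
    rw [Finset.sum_pair hpq, hp, hq, cell_sum hmem i j] at hle
    linarith
  have hM : ∀ i j k l, z i j k l = (∑ k', z i j k' l) * (z i j k 0 + z i j k 1) := by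
    intro i j k l
    rcases h01 i j k l with h0 | h1
    · rw [h0]
      by_cases hA : (∑ k', z i j k' l) = 0
      · rw [hA]; ring
      by_cases hB : z i j k 0 + z i j k 1 = 0
      · rw [hB]; ring
      exfalso
      obtain ⟨k', -, hk'⟩ := Finset.exists_ne_zero_of_sum_ne_zero hA
      have hk1 : z i j k' l = 1 := (h01 i j k' l).resolve_left hk'
      have hkk : k' ≠ k := by
        intro h; rw [h, h0] at hk1; norm_num at hk1
      have hone : z i j k 0 = 1 ∨ z i j k 1 = 1 := by
        rcases h01 i j k 0 with c0 | c0 <;> rcases h01 i j k 1 with c1 | c1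
        · exact absurd (by rw [c0, c1]; ring) hB
        · exact Or.inr c1
        · exact Or.inl c0
        · exact Or.inl c0
      rcases hone with hc | hc
      · have hl : l ≠ 0 := by intro h; subst h; rw [h0] at hc; norm_num at hc
        exact htwo i j (k', l) (k, 0) (by simp [Prod.ext_iff, hkk]) hk1 hc
      · have hl : l ≠ 1 := by intro h; subst h; rw [h0] at hc; norm_num at hc
        exact htwo i j (k', l) (k, 1) (by simp [Prod.ext_iff, hkk]) hk1 hc
    · rw [h1]
      have hrest : ∀ p : Fin 3 × Fin 2, p ≠ (k, l) → z i j p.1 p.2 = 0 := by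
        intro p hp
        by_contra hc
        exact htwo i j p (k, l) hp ((h01 i j p.1 p.2).resolve_left hc) h1
      have hA : (∑ k', z i j k' l) = 1 := by
        rw [Fintype.sum_eq_single k (fun k' hk' => hrest (k', l) (by simp [Prod.ext_iff, hk']))]
        exact h1
      have hB : z i j k 0 + z i j k 1 = 1 := by
        rcases fin2cases l with hl | hl
        · subst hl
          rw [h1, hrest (k, 1) (by simp [Prod.ext_iff])]; ring
        · subst hl
          rw [h1, hrest (k, 0) (by simp [Prod.ext_iff])]; ring
      rw [hA, hB]; ring
  have hsplit : ∀ i j, ∑ k, (z i j k 0 + z i j k 1) = 1 := by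
    intro i j
    have := hmem.1 i j
    simpa [Fin.sum_univ_two] using this
  have hR : ∀ i j l, (∑ k', z i j k' l) = ∑ k', z i j0 k' l := by
    intro i j l
    rcases fin2cases l with hl | hl
    · subst hl; exact hmem.2.1 i j j0
    · subst hl
      have e1 := hsplit i j
      have e2 := hsplit i j0
      have e3 := hmem.2.1 i j j0
      rw [Finset.sum_add_distrib] at e1 e2
      linarith
  have hC : ∀ i j k, z i j k 0 + z i j k 1 = z i0 j k 0 + z i0 j k 1 :=
    fun i j k => hmem.2.2.1 k j i i0
  have hRsum : ∀ i, (∑ k', z i j0 k' 0) + (∑ k', z i j0 k' 1) = 1 := by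
    intro i
    have := hsplit i j0
    rw [Finset.sum_add_distrib] at this
    exact this
  have hRnonneg : ∀ i l, (0:ℝ) ≤ ∑ k', z i j0 k' l :=
    fun i l => Finset.sum_nonneg fun k' _ => hnn i j0 k' l
  have hR0 : ∀ i, (∑ k', z i j0 k' 0) = 0 ∨ (∑ k', z i j0 k' 0) = 1 := by
    intro i
    have hle : (∑ k', z i j0 k' 0) ≤ 1 := by
      have := hRsum i
      have := hRnonneg i 1
      linarith
    rcases h01 i j0 0 0 with c0 | c0 <;> rcases h01 i j0 1 0 with c1 | c1 <;>
      rcases h01 i j0 2 0 with c2 | c2 <;>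
      rw [Fin.sum_univ_three] at hle ⊢ <;> rw [c0, c1, c2] at hle ⊢ <;> norm_num at hle <;> norm_num
  refine ⟨fun i => if (∑ k', z i j0 k' 0) = 1 then 0 else 1,
          fun j => if z i0 j 0 0 + z i0 j 0 1 = 1 then 0
                   else if z i0 j 1 0 + z i0 j 1 1 = 1 then 1 else 2, ?_⟩
  funext i j k l
  have hij : z i j k l = (∑ k', z i j0 k' l) * (z i0 j k 0 + z i0 j k 1) := by
    rw [hM i j k l, hR i j l, hC i j k]
  have hRval : (∑ k', z i j0 k' l)
      = if (if (∑ k', z i j0 k' 0) = 1 then (0:Fin 2) else 1) = l then 1 else 0 := by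
    by_cases hA0 : (∑ k', z i j0 k' 0) = 1
    · rw [if_pos hA0]
      rcases fin2cases l with hl | hl <;> subst hl
      · rw [if_pos rfl]; exact hA0
      · rw [if_neg (by decide)]
        have := hRsum i
        linarith
    · have hz0 : (∑ k', z i j0 k' 0) = 0 := (hR0 i).resolve_right hA0
      rw [if_neg hA0]
      rcases fin2cases l with hl | hl <;> subst hl
      · rw [if_neg (by decide)]; exact hz0
      · rw [if_pos rfl]
        have := hRsum i
        linarith
  have hCnn : ∀ k', (0:ℝ) ≤ z i0 j k' 0 + z i0 j k' 1 := by
    intro k'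
    have := hnn i0 j k' 0
    have := hnn i0 j k' 1
    linarith
  have hCsum : (z i0 j 0 0 + z i0 j 0 1) + (z i0 j 1 0 + z i0 j 1 1)
      + (z i0 j 2 0 + z i0 j 2 1) = 1 := by
    have := hsplit i0 j
    rw [Fin.sum_univ_three] at this
    exact this
  have hCzero : ∀ k', z i0 j k' 0 + z i0 j k' 1 ≠ 1 → z i0 j k' 0 + z i0 j k' 1 = 0 := by
    intro k' hne
    have hle : z i0 j k' 0 + z i0 j k' 1 ≤ 1 := by
      have h2 : ∑ r, (z i0 j r 0 + z i0 j r 1) = 1 := hsplit i0 j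
      have h3 : z i0 j k' 0 + z i0 j k' 1 ≤ ∑ r, (z i0 j r 0 + z i0 j r 1) :=
        Finset.single_le_sum (f := fun r : Fin 3 => z i0 j r 0 + z i0 j r 1)
          (fun r _ => hCnn r) (Finset.mem_univ k')
      linarith
    rcases h01 i0 j k' 0 with c0 | c0 <;> rcases h01 i0 j k' 1 with c1 | c1 <;>
      rw [c0, c1] at hne hle ⊢ <;> norm_num at hne <;> norm_num at hle <;> norm_num
  have hCval : (z i0 j k 0 + z i0 j k 1)
      = if (if z i0 j 0 0 + z i0 j 0 1 = 1 then (0:Fin 3)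
            else if z i0 j 1 0 + z i0 j 1 1 = 1 then 1 else 2) = k then 1 else 0 := by
    have d0 := hCnn 0
    have d1 := hCnn 1
    have d2 := hCnn 2
    by_cases hB0 : z i0 j 0 0 + z i0 j 0 1 = 1
    · rw [if_pos hB0]
      rcases fin3cases k with hk | hk | hk <;> subst hk
      · rw [if_pos rfl]; exact hB0
      · rw [if_neg (by decide)]
        have := hCnn 2
        linarith
      · rw [if_neg (by decide)]
        have := hCnn 1
        linarith
    · rw [if_neg hB0]
      have hC0 : z i0 j 0 0 + z i0 j 0 1 = 0 := hCzero 0 hB0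
      by_cases hB1 : z i0 j 1 0 + z i0 j 1 1 = 1
      · rw [if_pos hB1]
        rcases fin3cases k with hk | hk | hk <;> subst hk
        · rw [if_neg (by decide)]; exact hC0
        · rw [if_pos rfl]; exact hB1
        · rw [if_neg (by decide)]
          linarith
      · rw [if_neg hB1]
        have hC1 : z i0 j 1 0 + z i0 j 1 1 = 0 := hCzero 1 hB1
        rcases fin3cases k with hk | hk | hk <;> subst hk
        · rw [if_neg (by decide)]; exact hC0
        · rw [if_neg (by decide)]; exact hC1
        · rw [if_pos rfl]
          linarith
  rw [hij, hRval, hCval]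
  simp only [pt]
  by_cases hP : (if (∑ k', z i j0 k' 0) = 1 then (0:Fin 2) else 1) = l <;>
    by_cases hQ : (if z i0 j 0 0 + z i0 j 0 1 = 1 then (0:Fin 3)
        else if z i0 j 1 0 + z i0 j 1 1 = 1 then 1 else 2) = k <;>
    simp [hP, hQ]

lemma pt_ne_of_a {m n : ℕ} (c c' : Fin m → Fin 2) (b : Fin n → Fin 3) (j0 : Fin n)
    (i : Fin m) (hci : c i ≠ c' i) : pt c b ≠ pt c' b := by
  intro h
  have h2 := congrFun (congrFun (congrFun (congrFun h i) j0) (b j0)) (c i)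
  simp [pt, Ne.symm hci] at h2

lemma pt_ne_of_b {m n : ℕ} (a : Fin m → Fin 2) (c c' : Fin n → Fin 3) (i0 : Fin m)
    (j : Fin n) (hcj : c j ≠ c' j) : pt a c ≠ pt a c' := by
  intro h
  have h2 := congrFun (congrFun (congrFun (congrFun h i0) j) (c j)) (a i0)
  simp [pt, Ne.symm hcj] at h2

lemma badA {m n : ℕ} (a a' : Fin m → Fin 2) (b : Fin n → Fin 3) (j0 : Fin n)
    (hadj : IsAdjacent (pt a b) (pt a' b))
    (i1 i2 : Fin m) (h12 : i1 ≠ i2) (hi1 : a i1 ≠ a' i1) (hi2 : a i2 ≠ a' i2) : False := by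
  classical
  obtain ⟨hu, hv, huv, hdisj⟩ := hadj
  set a1 := Function.update a i1 (a' i1) with ha1
  set a2 := Function.update a' i1 (a i1) with ha2
  have e11 : a1 i1 = a' i1 := Function.update_self _ _ _
  have e12 : a1 i2 = a i2 := Function.update_of_ne (Ne.symm h12) _ _
  have e21 : a2 i1 = a i1 := Function.update_self _ _ _
  have e22 : a2 i2 = a' i2 := Function.update_of_ne (Ne.symm h12) _ _
  have hsum : ∀ i j k l, pt a b i j k l + pt a' b i j k l
      = pt a1 b i j k l + pt a2 b i j k l := by
    intro i j k l
    by_cases hii : i = i1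
    · subst hii
      simp only [pt, e11, e21]
      ring
    · simp only [pt, ha1, ha2, Function.update_of_ne hii]
  have hmid : (2⁻¹:ℝ) • pt a b + (2⁻¹:ℝ) • pt a' b
      = (2⁻¹:ℝ) • pt a1 b + (2⁻¹:ℝ) • pt a2 b := by
    funext i j k l
    simp only [Pi.add_apply, Pi.smul_apply, smul_eq_mul]
    have := hsum i j k l
    linarith
  have hw1u : pt a1 b ≠ pt a b := pt_ne_of_a a1 a b j0 i1 (by rw [e11]; exact Ne.symm hi1)
  have hw1v : pt a1 b ≠ pt a' b := pt_ne_of_a a1 a' b j0 i2 (by rw [e12]; exact hi2)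
  have hw2u : pt a2 b ≠ pt a b := pt_ne_of_a a2 a b j0 i2 (by rw [e22]; exact Ne.symm hi2)
  have hw2v : pt a2 b ≠ pt a' b := pt_ne_of_a a2 a' b j0 i1 (by rw [e21]; exact hi1)
  have hw1 : pt a1 b ∈ IntPts m n \ {pt a b, pt a' b} := by
    refine ⟨pt_mem_IntPts a1 b, ?_⟩
    intro hc
    rcases hc with hc | hc
    · exact hw1u hc
    · exact hw1v hc
  have hw2 : pt a2 b ∈ IntPts m n \ {pt a b, pt a' b} := by
    refine ⟨pt_mem_IntPts a2 b, ?_⟩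
    intro hc
    rcases hc with hc | hc
    · exact hw2u hc
    · exact hw2v hc
  have hMseg : (2⁻¹:ℝ) • pt a b + (2⁻¹:ℝ) • pt a' b ∈ segment ℝ (pt a b) (pt a' b) :=
    ⟨2⁻¹, 2⁻¹, by norm_num, by norm_num, by norm_num, rfl⟩
  have hMhull : (2⁻¹:ℝ) • pt a b + (2⁻¹:ℝ) • pt a' b
      ∈ convexHull ℝ (IntPts m n \ {pt a b, pt a' b}) := by
    rw [hmid]
    exact segment_subset_convexHull hw1 hw2
      ⟨2⁻¹, 2⁻¹, by norm_num, by norm_num, by norm_num, rfl⟩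
  have hmem : (2⁻¹:ℝ) • pt a b + (2⁻¹:ℝ) • pt a' b
      ∈ segment ℝ (pt a b) (pt a' b) ∩ convexHull ℝ (IntPts m n \ {pt a b, pt a' b}) :=
    ⟨hMseg, hMhull⟩
  rw [hdisj] at hmem
  exact hmem

lemma badB {m n : ℕ} (a : Fin m → Fin 2) (b b' : Fin n → Fin 3) (i0 : Fin m)
    (hadj : IsAdjacent (pt a b) (pt a b'))
    (j1 j2 : Fin n) (h12 : j1 ≠ j2) (hj1 : b j1 ≠ b' j1) (hj2 : b j2 ≠ b' j2) : False := by
  classical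
  obtain ⟨hu, hv, huv, hdisj⟩ := hadj
  set b1 := Function.update b j1 (b' j1) with hb1
  set b2 := Function.update b' j1 (b j1) with hb2
  have e11 : b1 j1 = b' j1 := Function.update_self _ _ _
  have e12 : b1 j2 = b j2 := Function.update_of_ne (Ne.symm h12) _ _
  have e21 : b2 j1 = b j1 := Function.update_self _ _ _
  have e22 : b2 j2 = b' j2 := Function.update_of_ne (Ne.symm h12) _ _
  have hsum : ∀ i j k l, pt a b i j k l + pt a b' i j k l
      = pt a b1 i j k l + pt a b2 i j k l := by
    intro i j k l
    by_cases hjj : j = j1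
    · subst hjj
      simp only [pt, e11, e21]
      ring
    · simp only [pt, hb1, hb2, Function.update_of_ne hjj]
  have hmid : (2⁻¹:ℝ) • pt a b + (2⁻¹:ℝ) • pt a b'
      = (2⁻¹:ℝ) • pt a b1 + (2⁻¹:ℝ) • pt a b2 := by
    funext i j k l
    simp only [Pi.add_apply, Pi.smul_apply, smul_eq_mul]
    have := hsum i j k l
    linarith
  have hw1u : pt a b1 ≠ pt a b := pt_ne_of_b a b1 b i0 j1 (by rw [e11]; exact Ne.symm hj1)
  have hw1v : pt a b1 ≠ pt a b' := pt_ne_of_b a b1 b' i0 j2 (by rw [e12]; exact hj2)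
  have hw2u : pt a b2 ≠ pt a b := pt_ne_of_b a b2 b i0 j2 (by rw [e22]; exact Ne.symm hj2)
  have hw2v : pt a b2 ≠ pt a b' := pt_ne_of_b a b2 b' i0 j1 (by rw [e21]; exact hj1)
  have hw1 : pt a b1 ∈ IntPts m n \ {pt a b, pt a b'} := by
    refine ⟨pt_mem_IntPts a b1, ?_⟩
    intro hc
    rcases hc with hc | hc
    · exact hw1u hc
    · exact hw1v hc
  have hw2 : pt a b2 ∈ IntPts m n \ {pt a b, pt a b'} := by
    refine ⟨pt_mem_IntPts a b2, ?_⟩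
    intro hc
    rcases hc with hc | hc
    · exact hw2u hc
    · exact hw2v hc
  have hMseg : (2⁻¹:ℝ) • pt a b + (2⁻¹:ℝ) • pt a b' ∈ segment ℝ (pt a b) (pt a b') :=
    ⟨2⁻¹, 2⁻¹, by norm_num, by norm_num, by norm_num, rfl⟩
  have hMhull : (2⁻¹:ℝ) • pt a b + (2⁻¹:ℝ) • pt a b'
      ∈ convexHull ℝ (IntPts m n \ {pt a b, pt a b'}) := by
    rw [hmid]
    exact segment_subset_convexHull hw1 hw2
      ⟨2⁻¹, 2⁻¹, by norm_num, by norm_num, by norm_num, rfl⟩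
  have hmem : (2⁻¹:ℝ) • pt a b + (2⁻¹:ℝ) • pt a b'
      ∈ segment ℝ (pt a b) (pt a b') ∩ convexHull ℝ (IntPts m n \ {pt a b, pt a b'}) :=
    ⟨hMseg, hMhull⟩
  rw [hdisj] at hmem
  exact hmem

lemma key {m n : ℕ} (a a' : Fin m → Fin 2) (b b' : Fin n → Fin 3)
    (i0 : Fin m) (j0 : Fin n)
    (hadj : IsAdjacent (pt a b) (pt a' b'))
    (x : Pt m n) (hx : x ∈ SATPLP m n)
    (hs : ∀ i j k l, pt a b i j k l = 0 → pt a' b' i j k l = 0 → x i j k l = 0) :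
    x ∈ segment ℝ (pt a b) (pt a' b') := by
  classical
  have hnn := hx.2.2.2
  have hstar := star a a' b b' x hx hs
  have hA := tconstA a a' b b' x hx hs
  have hB := tconstB a a' b b' x hx hs
  -- a uniform finishing move
  have finish : ∀ lam : ℝ, 0 ≤ lam → lam ≤ 1 →
      (∀ i j k l, x i j k l = (1 - lam) * pt a b i j k l + lam * pt a' b' i j k l) →
      x ∈ segment ℝ (pt a b) (pt a' b') := by
    intro lam h0 h1 hall
    refine ⟨1 - lam, lam, by linarith, h0, by ring, ?_⟩
    funext i j k l
    simp only [Pi.add_apply, Pi.smul_apply, smul_eq_mul]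
    exact (hall i j k l).symm
  by_cases ha : ∀ i, a i = a' i
  · by_cases hb : ∀ j, b j = b' j
    · exfalso
      apply hadj.2.2.1
      funext i j k l
      simp only [pt, ha i, hb j]
    · push_neg at hb
      obtain ⟨j1, hj1⟩ := hb
      obtain rfl : a = a' := funext ha
      by_cases hb2 : ∃ j2, j2 ≠ j1 ∧ b j2 ≠ b' j2
      · obtain ⟨j2, hj21, hj2⟩ := hb2
        exact absurd (badB a b b' i0 hadj j1 j2 (Ne.symm hj21) hj1 hj2) id
      · push_neg at hb2
        set lam := x i0 j1 (b' j1) (a i0) with hlam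
        have hbound : x i0 j1 (b j1) (a i0) = 1 - lam := by
          have := hstar i0 j1 (b j1) (a i0)
          have hu1 : pt a b i0 j1 (b j1) (a i0) = 1 := by simp [pt]
          have hv0 : pt a b' i0 j1 (b j1) (a i0) = 0 := by
            simp [pt, Ne.symm hj1]
          rw [hu1, hv0] at this
          rw [this]; ring
        refine finish lam (hnn i0 j1 (b' j1) (a i0)) ?_ ?_
        · have := hnn i0 j1 (b j1) (a i0)
          linarith [hbound]
        · intro i j k l
          by_cases hjj : j = j1
          · have ht : x i j (b' j) (a i) = lam := by
              rw [hjj, hB j1 hj1 i i0]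
            rw [hstar i j k l, ht]
          · have hbj : b j = b' j := hb2 j hjj
            have huv : pt a b i j k l = pt a b' i j k l := by
              simp only [pt, hbj]
            rw [hstar i j k l, huv]
            ring
  · push_neg at ha
    obtain ⟨i1, hi1⟩ := ha
    by_cases hb : ∀ j, b j = b' j
    · obtain rfl : b = b' := funext hb
      by_cases ha2 : ∃ i2, i2 ≠ i1 ∧ a i2 ≠ a' i2
      · obtain ⟨i2, hi21, hi2⟩ := ha2
        exact absurd (badA a a' b j0 hadj i1 i2 (Ne.symm hi21) hi1 hi2) id
      · push_neg at ha2
        set lam := x i1 j0 (b j0) (a' i1) with hlam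
        have hbound : x i1 j0 (b j0) (a i1) = 1 - lam := by
          have := hstar i1 j0 (b j0) (a i1)
          have hu1 : pt a b i1 j0 (b j0) (a i1) = 1 := by simp [pt]
          have hv0 : pt a' b i1 j0 (b j0) (a i1) = 0 := by
            simp [pt, Ne.symm hi1]
          rw [hu1, hv0] at this
          rw [this]; ring
        refine finish lam (hnn i1 j0 (b j0) (a' i1)) ?_ ?_
        · have := hnn i1 j0 (b j0) (a i1)
          linarith [hbound]
        · intro i j k l
          by_cases hii : i = i1
          · have ht : x i j (b j) (a' i) = lam := by
              rw [hii, hA i1 hi1 j j0]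
            rw [hstar i j k l, ht]
          · have hai : a i = a' i := ha2 i hii
            have huv : pt a b i j k l = pt a' b i j k l := by
              simp only [pt, hai]
            rw [hstar i j k l, huv]
            ring
    · push_neg at hb
      obtain ⟨j1, hj1⟩ := hb
      set lam := x i1 j1 (b' j1) (a' i1) with hlam
      have hbound : x i1 j1 (b j1) (a i1) = 1 - lam := by
        have := hstar i1 j1 (b j1) (a i1)
        have hu1 : pt a b i1 j1 (b j1) (a i1) = 1 := by simp [pt]
        have hv0 : pt a' b' i1 j1 (b j1) (a i1) = 0 := by
          simp [pt, Ne.symm hj1]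
        rw [hu1, hv0] at this
        rw [this]; ring
      refine finish lam (hnn i1 j1 (b' j1) (a' i1)) ?_ ?_
      · have := hnn i1 j1 (b j1) (a i1)
        linarith [hbound]
      · intro i j k l
        by_cases hia : a i = a' i
        · by_cases hjb : b j = b' j
          · have huv : pt a b i j k l = pt a' b' i j k l := by
              simp only [pt, hia, hjb]
            rw [hstar i j k l, huv]
            ring
          · have ht : x i j (b' j) (a' i) = lam := by
              rw [hB j hjb i i1, hA i1 hi1 j j1]
            rw [hstar i j k l, ht]
        · have ht : x i j (b' j) (a' i) = lam := by
            rw [hA i hia j j1, hB j1 hj1 i i1]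
          rw [hstar i j k l, ht]

/-- Trubin quasi-integrality: if u and v are adjacent vertices of
SATP(m,n), then the segment [u,v] is a face of SATP_LP(m,n); in particular every
integral point of SATP_LP(m,n) is an extreme point of SATP_LP(m,n). -/
theorem stmt12 (m n : ℕ) :
    (∀ u v : Pt m n, IsAdjacent u v → IsExtreme ℝ (SATPLP m n) (segment ℝ u v)) ∧
    (∀ z ∈ IntPts m n, z ∈ Set.extremePoints ℝ (SATPLP m n)) := by

  constructor
  · intro u v hadj
    have hadj' := hadj
    obtain ⟨hu, hv, huv, hdisj⟩ := hadj
    rcases isEmpty_or_nonempty (Fin m) with hE | hNEm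
    · exact absurd (funext fun i => (hE.false i).elim) huv
    rcases isEmpty_or_nonempty (Fin n) with hE | hNEn
    · exact absurd (funext fun i => funext fun j => (hE.false j).elim) huv
    obtain ⟨i0⟩ := hNEm
    obtain ⟨j0⟩ := hNEn
    obtain ⟨a, b, rfl⟩ := intpts_repr u hu i0 j0
    obtain ⟨a', b', rfl⟩ := intpts_repr v hv i0 j0
    constructor
    · exact (satplp_convex m n).segment_subset hu.1 hv.1
    · intro x1 hx1 x2 hx2 p hp hpo
      obtain ⟨c1, c2, hc1, hc2, hc12, hcp⟩ := hp
      obtain ⟨t1, t2, ht1, ht2, ht12, htp⟩ := hpo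
      have hz : ∀ i j k l, pt a b i j k l = 0 → pt a' b' i j k l = 0 →
          x1 i j k l = 0 ∧ x2 i j k l = 0 := by
        intro i j k l h1 h2
        have hp0 : p i j k l = 0 := by
          rw [← hcp]
          simp only [Pi.add_apply, Pi.smul_apply, smul_eq_mul, h1, h2]
          ring
        have he : t1 * x1 i j k l + t2 * x2 i j k l = 0 := by
          have h3 := congrFun (congrFun (congrFun (congrFun htp i) j) k) l
          simp only [Pi.add_apply, Pi.smul_apply, smul_eq_mul] at h3
          rw [hp0] at h3
          exact h3
        have n1 := mul_nonneg (le_of_lt ht1) (hx1.2.2.2 i j k l)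
        have n2 := mul_nonneg (le_of_lt ht2) (hx2.2.2.2 i j k l)
        constructor
        · have h4 : t1 * x1 i j k l = 0 := by linarith
          rcases mul_eq_zero.mp h4 with h | h
          · exact absurd h (ne_of_gt ht1)
          · exact h
        · have h4 : t2 * x2 i j k l = 0 := by linarith
          rcases mul_eq_zero.mp h4 with h | h
          · exact absurd h (ne_of_gt ht2)
          · exact h
      exact key a a' b b' i0 j0 hadj' x1 hx1 (fun i j k l h1 h2 => (hz i j k l h1 h2).1)
  · intro z hz
    refine ⟨hz.1, ?_⟩
    intro x1 hx1 x2 hx2 ho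
    obtain ⟨t1, t2, ht1, ht2, ht12, htp⟩ := ho
    have hkey : ∀ i j k l, x1 i j k l = z i j k l ∧ x2 i j k l = z i j k l := by
      intro i j k l
      have he : t1 * x1 i j k l + t2 * x2 i j k l = z i j k l := by
        have h3 := congrFun (congrFun (congrFun (congrFun htp i) j) k) l
        simpa only [Pi.add_apply, Pi.smul_apply, smul_eq_mul] using h3
      have b1l := hx1.2.2.2 i j k l
      have b1u := satplp_le_one hx1 i j k l
      have b2l := hx2.2.2.2 i j k l
      have b2u := satplp_le_one hx2 i j k l
      rcases hz.2 i j k l with h0 | h1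
      · rw [h0] at he ⊢
        have n1 := mul_nonneg (le_of_lt ht1) b1l
        have n2 := mul_nonneg (le_of_lt ht2) b2l
        constructor
        · have h4 : t1 * x1 i j k l = 0 := by linarith
          rcases mul_eq_zero.mp h4 with h | h
          · exact absurd h (ne_of_gt ht1)
          · exact h
        · have h4 : t2 * x2 i j k l = 0 := by linarith
          rcases mul_eq_zero.mp h4 with h | h
          · exact absurd h (ne_of_gt ht2)
          · exact h
      · rw [h1] at he ⊢
        have n1 := mul_nonneg (le_of_lt ht1) (by linarith : (0:ℝ) ≤ 1 - x1 i j k l)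
        have n2 := mul_nonneg (le_of_lt ht2) (by linarith : (0:ℝ) ≤ 1 - x2 i j k l)
        have hAB : t1 * (1 - x1 i j k l) + t2 * (1 - x2 i j k l) = 0 := by
          have : t1 * (1 - x1 i j k l) + t2 * (1 - x2 i j k l)
              = (t1 + t2) - (t1 * x1 i j k l + t2 * x2 i j k l) := by ring
          rw [this, he, ht12]
          ring
        constructor
        · have h4 : t1 * (1 - x1 i j k l) = 0 := by linarith
          rcases mul_eq_zero.mp h4 with h | h
          · exact absurd h (ne_of_gt ht1)
          · linarith
        · have h4 : t2 * (1 - x2 i j k l) = 0 := by linarith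
          rcases mul_eq_zero.mp h4 with h | h
          · exact absurd h (ne_of_gt ht2)
          · linarith
    exact funext fun i => funext fun j => funext fun k => funext fun l => (hkey i j k l).1
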